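/- Explicit primal–dual marginal mapping for the Ising model (equation (44)): with J(e) ≥ 0 for all e, H(v) ≥ 0 for all v, and J(e₀) > 0 for a fixed edge e₀, the primal and dual edge marginals at e₀ satisfy π_p(e₀) = e^{J(e₀)}·( π_d(e₀)/(2·cosh(J(e₀))) + (1 − π_d(e₀))/(2·sinh(J(e₀))) ), where π_p(e₀) = (Σ_{x : x(s e₀) = x(t e₀)} w(x)) / (Σ_x w(x)) and π_d(e₀) = (Σ_{ỹ : ỹ(e₀) = 0} W(ỹ)) / (Σ_ỹ W(ỹ)). -/

import Mathlib

open scoped BigOperators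

/-- The weight of a primal Ising configuration `x : V → ZMod 2`. -/
noncomputable def isingWeight {V E : Type*} [Fintype V] [Fintype E]
    (s t : E → V) (J : E → ℝ) (H : V → ℝ) (x : V → ZMod 2) : ℝ :=
  (∏ e : E, Real.exp (J e * (if x (s e) = x (t e) then 1 else -1))) *
    ∏ v : V, Real.exp (H v * (if x v = 0 then 1 else -1))

/-- The dual vertex variable `x̃_v(yt)` in `ZMod 2`. -/
noncomputable def dualX2 {V E : Type*} [Fintype E] [DecidableEq V]
    (s t : E → V) (yt : E → ZMod 2) (v : V) : ZMod 2 :=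
  (∑ e ∈ Finset.univ.filter (fun e => s e = v), yt e) +
    ∑ e ∈ Finset.univ.filter (fun e => t e = v), yt e

/-- The weight of a dual Ising configuration `yt : E → ZMod 2`. -/
noncomputable def dualIsingWeight {V E : Type*} [Fintype V] [Fintype E] [DecidableEq V]
    (s t : E → V) (J : E → ℝ) (H : V → ℝ) (yt : E → ZMod 2) : ℝ :=
  (∏ e : E, if yt e = 0 then Real.cosh (J e) else Real.sinh (J e)) *
    ∏ v : V, if dualX2 s t yt v = 0 then Real.cosh (H v) else Real.sinh (H v)

set_option linter.all false

def chi2 (a : ZMod 2) : ℝ := if a = 0 then 1 else -1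

lemma z10 : (1 : ZMod 2) ≠ 0 := by decide
lemma z110 : (1 : ZMod 2) + 1 = 0 := by decide

lemma sum_zmod2 (f : ZMod 2 → ℝ) : ∑ a : ZMod 2, f a = f 0 + f 1 := by
  rw [show (Finset.univ : Finset (ZMod 2)) = {0, 1} from by decide,
    Finset.sum_pair (by decide)]

lemma chi2_add (a b : ZMod 2) : chi2 (a + b) = chi2 a * chi2 b := by
  obtain rfl | rfl := (by decide : ∀ w : ZMod 2, w = 0 ∨ w = 1) a <;> obtain rfl | rfl := (by decide : ∀ w : ZMod 2, w = 0 ∨ w = 1) b <;> simp [chi2, z10, z110]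

lemma chi2_sum {ι : Type*} (s : Finset ι) (f : ι → ZMod 2) :
    chi2 (∑ i ∈ s, f i) = ∏ i ∈ s, chi2 (f i) := by
  induction s using Finset.cons_induction with
  | empty => simp [chi2]
  | cons i s hi ih => rw [Finset.sum_cons, Finset.prod_cons, chi2_add, ih]

lemma sum_chi2_mul (m : ZMod 2) :
    ∑ a : ZMod 2, chi2 (m * a) = if m = 0 then 2 else 0 := by
  obtain rfl | rfl := (by decide : ∀ w : ZMod 2, w = 0 ∨ w = 1) m <;> simp [sum_zmod2, chi2, z10] <;> norm_num

lemma edge_expand (J : ℝ) (um m : ZMod 2) :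
    chi2 (um * m) * Real.exp (J * (if m = 0 then 1 else -1)) =
      ∑ b : ZMod 2, (if b + um = 0 then Real.cosh J else Real.sinh J) * chi2 (b * m) := by
  have h1 := Real.cosh_add_sinh J
  have h2 := Real.cosh_sub_sinh J
  obtain rfl | rfl := (by decide : ∀ w : ZMod 2, w = 0 ∨ w = 1) um <;> obtain rfl | rfl := (by decide : ∀ w : ZMod 2, w = 0 ∨ w = 1) m <;>
    simp [sum_zmod2, chi2, z10, z110] <;> linarith

lemma vert_expand (H : ℝ) (m : ZMod 2) :
    Real.exp (H * (if m = 0 then 1 else -1)) =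
      ∑ a : ZMod 2, (if a = 0 then Real.cosh H else Real.sinh H) * chi2 (a * m) := by
  have h1 := Real.cosh_add_sinh H
  have h2 := Real.cosh_sub_sinh H
  obtain rfl | rfl := (by decide : ∀ w : ZMod 2, w = 0 ∨ w = 1) m <;> simp [sum_zmod2, chi2, z10] <;> linarith


section IsingAux
variable {V E : Type*} [Fintype V] [Fintype E] [DecidableEq V] [DecidableEq E]

lemma prod_chi2_edge (s : E → V) (y : E → ZMod 2) (x : V → ZMod 2) :
    ∏ e : E, chi2 (y e * x (s e)) =
      ∏ v : V, chi2 ((∑ e ∈ Finset.univ.filter (fun e => s e = v), y e) * x v) := by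
  rw [← Finset.prod_fiberwise Finset.univ s (fun e => chi2 (y e * x (s e)))]
  refine Finset.prod_congr rfl fun v _ => ?_
  rw [Finset.sum_mul, chi2_sum]
  refine Finset.prod_congr rfl fun e he => ?_
  rw [(Finset.mem_filter.1 he).2]

lemma inner_char_sum (s t : E → V) (y : E → ZMod 2) (z : V → ZMod 2) :
    ∑ x : V → ZMod 2, (∏ e : E, chi2 (y e * (x (s e) + x (t e)))) * ∏ v : V, chi2 (z v * x v)
      = ∏ v : V, (if dualX2 s t y v + z v = 0 then (2:ℝ) else 0) := by
  have step1 : ∀ x : V → ZMod 2,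
      (∏ e : E, chi2 (y e * (x (s e) + x (t e)))) * ∏ v : V, chi2 (z v * x v)
        = ∏ v : V, chi2 ((dualX2 s t y v + z v) * x v) := by
    intro x
    have : ∀ e : E, chi2 (y e * (x (s e) + x (t e)))
        = chi2 (y e * x (s e)) * chi2 (y e * x (t e)) := by
      intro e; rw [mul_add, chi2_add]
    rw [Finset.prod_congr rfl fun e _ => this e, Finset.prod_mul_distrib,
      prod_chi2_edge s y x, prod_chi2_edge t y x, ← Finset.prod_mul_distrib,
      ← Finset.prod_mul_distrib]
    refine Finset.prod_congr rfl fun v _ => ?_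
    rw [dualX2, add_mul, add_mul, chi2_add, chi2_add]
  rw [Finset.sum_congr rfl fun x _ => step1 x]
  rw [← Fintype.prod_sum (fun v a => chi2 ((dualX2 s t y v + z v) * a))]
  exact Finset.prod_congr rfl fun v _ => sum_chi2_mul _

lemma main_expansion (s t : E → V) (J : E → ℝ) (H : V → ℝ) (u : E → ZMod 2) :
    ∑ x : V → ZMod 2, (∏ e : E, chi2 (u e * (x (s e) + x (t e)))) * isingWeight s t J H x
      = 2 ^ Fintype.card V * ∑ yt : E → ZMod 2,
          (∏ e : E, if yt e + u e = 0 then Real.cosh (J e) else Real.sinh (J e)) *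
          ∏ v : V, (if dualX2 s t yt v = 0 then Real.cosh (H v) else Real.sinh (H v)) := by
  have heq : ∀ a b : ZMod 2, (a = b) ↔ (a + b = 0) := by decide
  calc
    ∑ x : V → ZMod 2, (∏ e : E, chi2 (u e * (x (s e) + x (t e)))) * isingWeight s t J H x
      = ∑ x : V → ZMod 2,
          (∑ y : E → ZMod 2, (∏ e : E, if y e + u e = 0 then Real.cosh (J e) else Real.sinh (J e))
              * ∏ e : E, chi2 (y e * (x (s e) + x (t e)))) *
          (∑ z : V → ZMod 2, (∏ v : V, if z v = 0 then Real.cosh (H v) else Real.sinh (H v))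
              * ∏ v : V, chi2 (z v * x v)) := by
        refine Finset.sum_congr rfl fun x _ => ?_
        rw [isingWeight, ← mul_assoc, Finset.prod_mul_distrib.symm]
        have e1 : ∀ e : E, chi2 (u e * (x (s e) + x (t e))) *
            Real.exp (J e * (if x (s e) = x (t e) then 1 else -1))
            = ∑ b : ZMod 2,
              (if b + u e = 0 then Real.cosh (J e) else Real.sinh (J e)) *
                chi2 (b * (x (s e) + x (t e))) := by
          intro e
          rw [show (if x (s e) = x (t e) then (1:ℝ) else -1)
              = (if x (s e) + x (t e) = 0 then (1:ℝ) else -1) from by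
            by_cases h : x (s e) = x (t e)
            · rw [if_pos h, if_pos ((heq _ _).1 h)]
            · rw [if_neg h, if_neg fun hc => h ((heq _ _).2 hc)]]
          exact edge_expand (J e) (u e) _
        have e2 : ∀ v : V, Real.exp (H v * (if x v = 0 then 1 else -1))
            = ∑ a : ZMod 2,
              (if a = 0 then Real.cosh (H v) else Real.sinh (H v)) * chi2 (a * x v) := by
          intro v
          rw [show (if x v = 0 then (1:ℝ) else -1)
              = (if x v = 0 then (1:ℝ) else -1) from rfl]
          exact vert_expand (H v) (x v)
        rw [Finset.prod_congr rfl fun e _ => e1 e, Finset.prod_congr rfl fun v _ => e2 v,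
          Fintype.prod_sum, Fintype.prod_sum]
        congr 1
        · refine Finset.sum_congr rfl fun y _ => ?_
          rw [Finset.prod_mul_distrib]
        · refine Finset.sum_congr rfl fun z _ => ?_
          rw [Finset.prod_mul_distrib]
    _ = ∑ y : E → ZMod 2, ∑ z : V → ZMod 2,
          ((∏ e : E, if y e + u e = 0 then Real.cosh (J e) else Real.sinh (J e)) *
           (∏ v : V, if z v = 0 then Real.cosh (H v) else Real.sinh (H v))) *
          ∑ x : V → ZMod 2,
            (∏ e : E, chi2 (y e * (x (s e) + x (t e)))) * ∏ v : V, chi2 (z v * x v) := by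
        have hpt : ∀ x : V → ZMod 2,
            (∑ y : E → ZMod 2, (∏ e : E, if y e + u e = 0 then Real.cosh (J e) else Real.sinh (J e))
                * ∏ e : E, chi2 (y e * (x (s e) + x (t e)))) *
            (∑ z : V → ZMod 2, (∏ v : V, if z v = 0 then Real.cosh (H v) else Real.sinh (H v))
                * ∏ v : V, chi2 (z v * x v))
            = ∑ y : E → ZMod 2, ∑ z : V → ZMod 2,
              ((∏ e : E, if y e + u e = 0 then Real.cosh (J e) else Real.sinh (J e)) *
               (∏ v : V, if z v = 0 then Real.cosh (H v) else Real.sinh (H v))) *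
              ((∏ e : E, chi2 (y e * (x (s e) + x (t e)))) * ∏ v : V, chi2 (z v * x v)) := by
          intro x
          rw [Finset.sum_mul_sum]
          exact Finset.sum_congr rfl fun y _ => Finset.sum_congr rfl fun z _ => by ring
        rw [Finset.sum_congr rfl fun x _ => hpt x]
        rw [Finset.sum_comm]
        refine Finset.sum_congr rfl fun y _ => ?_
        rw [Finset.sum_comm]
        exact Finset.sum_congr rfl fun z _ => (Finset.mul_sum _ _ _).symm
    _ = ∑ y : E → ZMod 2, ∑ z : V → ZMod 2,
          ((∏ e : E, if y e + u e = 0 then Real.cosh (J e) else Real.sinh (J e)) *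
           (∏ v : V, if z v = 0 then Real.cosh (H v) else Real.sinh (H v))) *
          ∏ v : V, (if dualX2 s t y v + z v = 0 then (2:ℝ) else 0) := by
        exact Finset.sum_congr rfl fun y _ => Finset.sum_congr rfl fun z _ => by
          rw [inner_char_sum]
    _ = 2 ^ Fintype.card V * ∑ yt : E → ZMod 2,
          (∏ e : E, if yt e + u e = 0 then Real.cosh (J e) else Real.sinh (J e)) *
          ∏ v : V, (if dualX2 s t yt v = 0 then Real.cosh (H v) else Real.sinh (H v)) := by
        rw [Finset.mul_sum]
        refine Finset.sum_congr rfl fun y _ => ?_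
        have hz : ∀ z : V → ZMod 2,
            ((∏ e : E, if y e + u e = 0 then Real.cosh (J e) else Real.sinh (J e)) *
             (∏ v : V, if z v = 0 then Real.cosh (H v) else Real.sinh (H v))) *
            ∏ v : V, (if dualX2 s t y v + z v = 0 then (2:ℝ) else 0)
            = (∏ e : E, if y e + u e = 0 then Real.cosh (J e) else Real.sinh (J e)) *
              ∏ v : V, ((if z v = 0 then Real.cosh (H v) else Real.sinh (H v)) *
                (if dualX2 s t y v + z v = 0 then (2:ℝ) else 0)) := by
          intro z; rw [Finset.prod_mul_distrib]; ring
        rw [Finset.sum_congr rfl fun z _ => hz z, ← Finset.mul_sum,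
          ← Fintype.prod_sum (fun v a =>
            (if a = 0 then Real.cosh (H v) else Real.sinh (H v)) *
              (if dualX2 s t y v + a = 0 then (2:ℝ) else 0))]
        have hv : ∀ v : V, ∑ a : ZMod 2,
            (if a = 0 then Real.cosh (H v) else Real.sinh (H v)) *
              (if dualX2 s t y v + a = 0 then (2:ℝ) else 0)
            = 2 * (if dualX2 s t y v = 0 then Real.cosh (H v) else Real.sinh (H v)) := by
          intro v
          rw [sum_zmod2]
          have hw : dualX2 s t y v = 0 ∨ dualX2 s t y v = 1 := by
            generalize dualX2 s t y v = w; revert w; decide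
          rcases hw with h | h <;> rw [h] <;> simp [z10, z110] <;> try ring
        rw [Finset.prod_congr rfl fun v _ => hv v, Finset.prod_mul_distrib,
          Finset.prod_const, Finset.card_univ]
        ring

lemma cor_zero (s t : E → V) (J : E → ℝ) (H : V → ℝ) :
    ∑ x : V → ZMod 2, isingWeight s t J H x
      = 2 ^ Fintype.card V * ∑ yt : E → ZMod 2, dualIsingWeight s t J H yt := by
  have h := main_expansion s t J H (fun _ => 0)
  simpa [chi2, dualIsingWeight] using h

lemma cor_one (s t : E → V) (J : E → ℝ) (H : V → ℝ) (e₀ : E) :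
    ∑ x : V → ZMod 2, chi2 (x (s e₀) + x (t e₀)) * isingWeight s t J H x
      = 2 ^ Fintype.card V * ∑ yt : E → ZMod 2,
          (∏ e : E, if yt e + (if e = e₀ then 1 else 0) = 0
              then Real.cosh (J e) else Real.sinh (J e)) *
          ∏ v : V, (if dualX2 s t yt v = 0 then Real.cosh (H v) else Real.sinh (H v)) := by
  have h := main_expansion s t J H (fun e => if e = e₀ then 1 else 0)
  rw [← h]
  refine Finset.sum_congr rfl fun x _ => ?_
  congr 1
  have : ∀ e : E, chi2 ((if e = e₀ then (1:ZMod 2) else 0) * (x (s e) + x (t e)))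
      = if e = e₀ then chi2 (x (s e) + x (t e)) else 1 := by
    intro e; by_cases h' : e = e₀ <;> simp [h', chi2]
  rw [Finset.prod_congr rfl fun e _ => this e, Finset.prod_ite_eq' Finset.univ e₀
    (fun e => chi2 (x (s e) + x (t e))), if_pos (Finset.mem_univ e₀)]

lemma swap_relation (s t : E → V) (J : E → ℝ) (H : V → ℝ) (e₀ : E) :
    Real.cosh (J e₀) * Real.sinh (J e₀) * (∑ yt : E → ZMod 2,
        (∏ e : E, if yt e + (if e = e₀ then 1 else 0) = 0
            then Real.cosh (J e) else Real.sinh (J e)) *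
        ∏ v : V, (if dualX2 s t yt v = 0 then Real.cosh (H v) else Real.sinh (H v)))
      = Real.sinh (J e₀) ^ 2 * (∑ yt ∈ Finset.univ.filter (fun yt : E → ZMod 2 => yt e₀ = 0),
            dualIsingWeight s t J H yt)
        + Real.cosh (J e₀) ^ 2 * (∑ yt ∈ Finset.univ.filter
            (fun yt : E → ZMod 2 => ¬ yt e₀ = 0), dualIsingWeight s t J H yt) := by
  set ch := Real.cosh (J e₀)
  set sh := Real.sinh (J e₀)
  have split := Finset.sum_filter_add_sum_filter_not Finset.univ
    (fun yt : E → ZMod 2 => yt e₀ = 0)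
    (fun yt => (∏ e : E, if yt e + (if e = e₀ then 1 else 0) = 0
        then Real.cosh (J e) else Real.sinh (J e)) *
      ∏ v : V, (if dualX2 s t yt v = 0 then Real.cosh (H v) else Real.sinh (H v)))
  rw [← split, mul_add]
  have key : ∀ (yt : E → ZMod 2),
      (∏ e : E, if yt e + (if e = e₀ then 1 else 0) = 0
          then Real.cosh (J e) else Real.sinh (J e))
        = (if yt e₀ + 1 = 0 then ch else sh) *
          ∏ e ∈ Finset.univ.erase e₀, (if yt e = 0 then Real.cosh (J e) else Real.sinh (J e)) := by
    intro yt
    rw [← Finset.mul_prod_erase Finset.univ _ (Finset.mem_univ e₀)]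
    congr 1
    · rw [if_pos rfl]
    · refine Finset.prod_congr rfl fun e he => ?_
      rw [if_neg (Finset.mem_erase.1 he).1, add_zero]
  have keyW : ∀ (yt : E → ZMod 2), dualIsingWeight s t J H yt
      = ((if yt e₀ = 0 then ch else sh) *
          ∏ e ∈ Finset.univ.erase e₀, (if yt e = 0 then Real.cosh (J e) else Real.sinh (J e))) *
        ∏ v : V, (if dualX2 s t yt v = 0 then Real.cosh (H v) else Real.sinh (H v)) := by
    intro yt
    rw [dualIsingWeight, ← Finset.mul_prod_erase Finset.univ _ (Finset.mem_univ e₀)]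
  congr 1
  · rw [Finset.mul_sum, Finset.mul_sum]
    refine Finset.sum_congr rfl fun yt hyt => ?_
    have h0 : yt e₀ = 0 := (Finset.mem_filter.1 hyt).2
    rw [key yt, keyW yt, h0, if_pos rfl, if_neg (by decide : ¬(0:ZMod 2) + 1 = 0)]
    ring
  · rw [Finset.mul_sum, Finset.mul_sum]
    refine Finset.sum_congr rfl fun yt hyt => ?_
    have h1 : yt e₀ = 1 :=
      (by decide : ∀ w : ZMod 2, ¬ w = 0 → w = 1) _ (Finset.mem_filter.1 hyt).2
    rw [key yt, keyW yt, h1, if_neg z10, if_pos z110]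
    ring

end IsingAux

theorem ising_marginal_mapping {V E : Type*} [Fintype V] [Fintype E]
    [DecidableEq V] [DecidableEq E]
    (s t : E → V) (J : E → ℝ) (H : V → ℝ)
    (hJ : ∀ e, 0 ≤ J e) (hH : ∀ v, 0 ≤ H v) (e₀ : E) (hJ₀ : 0 < J e₀) :
    (∑ x ∈ Finset.univ.filter (fun x : V → ZMod 2 => x (s e₀) = x (t e₀)),
        isingWeight s t J H x) / (∑ x : V → ZMod 2, isingWeight s t J H x) =
      Real.exp (J e₀) *
        (((∑ yt ∈ Finset.univ.filter (fun yt : E → ZMod 2 => yt e₀ = 0),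
            dualIsingWeight s t J H yt) / (∑ yt : E → ZMod 2, dualIsingWeight s t J H yt)) /
            (2 * Real.cosh (J e₀)) +
          (1 - (∑ yt ∈ Finset.univ.filter (fun yt : E → ZMod 2 => yt e₀ = 0),
            dualIsingWeight s t J H yt) / (∑ yt : E → ZMod 2, dualIsingWeight s t J H yt)) /
            (2 * Real.sinh (J e₀))) := by
  set ch := Real.cosh (J e₀) with hch_def
  set sh := Real.sinh (J e₀) with hsh_def
  set k : ℝ := 2 ^ Fintype.card V with hk_def
  set N := ∑ x ∈ Finset.univ.filter (fun x : V → ZMod 2 => x (s e₀) = x (t e₀)),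
      isingWeight s t J H x with hN_def
  set Zp := ∑ x : V → ZMod 2, isingWeight s t J H x with hZp_def
  set Zd := ∑ yt : E → ZMod 2, dualIsingWeight s t J H yt with hZd_def
  set A := ∑ yt ∈ Finset.univ.filter (fun yt : E → ZMod 2 => yt e₀ = 0),
      dualIsingWeight s t J H yt with hA_def
  set B := ∑ yt ∈ Finset.univ.filter (fun yt : E → ZMod 2 => ¬ yt e₀ = 0),
      dualIsingWeight s t J H yt with hB_def
  set Sw := ∑ yt : E → ZMod 2,
      (∏ e : E, if yt e + (if e = e₀ then 1 else 0) = 0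
          then Real.cosh (J e) else Real.sinh (J e)) *
      ∏ v : V, (if dualX2 s t yt v = 0 then Real.cosh (H v) else Real.sinh (H v)) with hSw_def
  have hch : 0 < ch := Real.cosh_pos (J e₀)
  have hsh : 0 < sh := Real.sinh_pos_iff.2 hJ₀
  have hk : 0 < k := by positivity
  have h1 : Zp = k * Zd := cor_zero s t J H
  have h2 : ∑ x : V → ZMod 2, chi2 (x (s e₀) + x (t e₀)) * isingWeight s t J H x = k * Sw :=
    cor_one s t J H e₀
  have h3 : ch * sh * Sw = sh ^ 2 * A + ch ^ 2 * B := swap_relation s t J H e₀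
  have h4 : A + B = Zd := Finset.sum_filter_add_sum_filter_not _ _ _
  have heq : ∀ a b : ZMod 2, a = b ↔ a + b = 0 := by decide
  have h5 : Zp + ∑ x : V → ZMod 2, chi2 (x (s e₀) + x (t e₀)) * isingWeight s t J H x
      = 2 * N := by
    rw [hZp_def, ← Finset.sum_add_distrib]
    have hpt : ∀ x : V → ZMod 2,
        isingWeight s t J H x + chi2 (x (s e₀) + x (t e₀)) * isingWeight s t J H x
          = if x (s e₀) = x (t e₀) then 2 * isingWeight s t J H x else 0 := by
      intro x
      by_cases h : x (s e₀) = x (t e₀)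
      · rw [if_pos h, chi2, if_pos ((heq _ _).1 h)]; ring
      · rw [if_neg h, chi2, if_neg (fun hc => h ((heq _ _).2 hc))]; ring
    rw [Finset.sum_congr rfl fun x _ => hpt x, ← Finset.sum_filter, hN_def, Finset.mul_sum]
  have hZppos : 0 < Zp := by
    rw [hZp_def]
    refine Finset.sum_pos (fun x _ => ?_) ⟨fun _ => 0, Finset.mem_univ _⟩
    rw [isingWeight]
    positivity
  have hZd : 0 < Zd := by
    have h := hZppos
    rw [h1] at h
    nlinarith
  have h5' : 2 * N = k * Zd + k * Sw := by rw [← h5, h1, h2]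
  have key : N * (2 * ch * sh * Zd) = (k * Zd) * ((ch + sh) * (A * sh + B * ch)) := by
    linear_combination (ch * sh * Zd) * h5' + (k * Zd) * h3 - (k * Zd * ch * sh) * h4
  have hBd : 1 - A / Zd = B / Zd := by
    field_simp
    linarith [h4]
  rw [h1, ← Real.cosh_add_sinh (J e₀), hBd, ← hch_def, ← hsh_def]
  rw [div_eq_iff (by positivity : k * Zd ≠ 0)]
  field_simp
  apply mul_right_cancel₀ hZd.ne'
  linear_combination key
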